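/- arXiv:2305.17293 — 5 statements merged into one kernel-verified Lean document; each statement's English description precedes it below -/
import Mathlib

section
/- Let ℓ¹ denote the space lp (fun _ : ℕ => ℂ) 1 of absolutely summable complex sequences. The formula (g a)(n) = a(n)/(n+1) defines an injective ℂ-linear map g : ℓ¹ → ℓ¹ with ‖g a‖ ≤ ‖a‖ for all a. Let x ∈ ℓ¹ be the sequence x(n) = 1/n!. Then for every continuous linear functional x⋆ : ℓ¹ → ℂ with ‖x⋆‖ ≤ 1 and x⋆(x) = ‖x‖, there is no continuous linear functional u : ℓ¹ → ℂ with ‖u‖ ≤ 1 and u ∘ g = x⋆. -/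
lemma norm_lp_one (a : lp (fun _ : ℕ => ℂ) 1) : ‖a‖ = ∑' n, ‖(a : ∀ _ : ℕ, ℂ) n‖ := by
  have := lp.norm_eq_tsum_rpow (p := 1) (by norm_num) a
  simpa using this

lemma summable_lp_one (a : lp (fun _ : ℕ => ℂ) 1) :
    Summable fun n => ‖(a : ∀ _ : ℕ, ℂ) n‖ := by
  have := lp.memℓp a
  have := (memℓp_gen_iff (p := 1) (by norm_num)).1 this
  simpa using this


/-- In the category of operator spaces and completely contractive maps, ℂ is not
injective: the contractive injective linear map `g : ℓ¹ → ℓ¹`, `(g a) n = a n / (n+1)`,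
and a norm-attaining functional `x⋆` at the sequence `x n = 1/n!` witness the failure
of the extension property. -/
theorem complex_not_injective_opsp
    (g : lp (fun _ : ℕ => ℂ) 1 →ₗ[ℂ] lp (fun _ : ℕ => ℂ) 1)
    (hg : ∀ (a : lp (fun _ : ℕ => ℂ) 1) (n : ℕ), (g a : ∀ _ : ℕ, ℂ) n = a n / (n + 1)) :
    Function.Injective g ∧ (∀ a, ‖g a‖ ≤ ‖a‖) ∧
      ∀ x : lp (fun _ : ℕ => ℂ) 1, (∀ n : ℕ, (x : ∀ _ : ℕ, ℂ) n = 1 / (n.factorial : ℂ)) →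
        ∀ xstar : lp (fun _ : ℕ => ℂ) 1 →L[ℂ] ℂ, ‖xstar‖ ≤ 1 → xstar x = (‖x‖ : ℂ) →
          ¬ ∃ u : lp (fun _ : ℕ => ℂ) 1 →L[ℂ] ℂ, ‖u‖ ≤ 1 ∧ ∀ a, u (g a) = xstar a := by
  have hnz : ∀ n : ℕ, ((n : ℂ) + 1) ≠ 0 := fun n =>
    Nat.cast_add_one_ne_zero n
  refine ⟨?_, ?_, ?_⟩
  · intro a b hab
    apply lp.ext
    funext n
    have : (g a : ∀ _ : ℕ, ℂ) n = (g b : ∀ _ : ℕ, ℂ) n := by rw [hab]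
    rw [hg, hg] at this
    have := div_eq_div_iff (hnz n) (hnz n) |>.1 this
    exact mul_right_cancel₀ (hnz n) this
  · intro a
    rw [norm_lp_one, norm_lp_one]
    refine Summable.tsum_le_tsum (fun n => ?_) (summable_lp_one _) (summable_lp_one _)
    rw [hg]
    rw [norm_div]
    refine div_le_self (norm_nonneg _) ?_
    have : ‖((n : ℂ) + 1)‖ = (n : ℝ) + 1 := by
      norm_cast
    rw [this]; linarith [Nat.cast_nonneg (α := ℝ) n]
  · intro x hx xstar hxs hval ⟨u, hu, hcomp⟩
    have key : ‖g x‖ < ‖x‖ := by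
      rw [norm_lp_one, norm_lp_one]
      refine Summable.tsum_lt_tsum (i := 1) (fun n => ?_) ?_ (summable_lp_one _) (summable_lp_one _)
      · rw [hg, norm_div]
        refine div_le_self (norm_nonneg _) ?_
        have : ‖((n : ℂ) + 1)‖ = (n : ℝ) + 1 := by
          norm_cast
        rw [this]; linarith [Nat.cast_nonneg (α := ℝ) n]
      · rw [hg, hx, norm_div, norm_div]
        norm_num
    have h1 : xstar x = u (g x) := (hcomp x).symm
    have h2 : ‖xstar x‖ ≤ ‖g x‖ := by
      rw [h1]
      calc ‖u (g x)‖ ≤ ‖u‖ * ‖g x‖ := u.le_opNorm _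
        _ ≤ 1 * ‖g x‖ := by gcongr
        _ = ‖g x‖ := one_mul _
    rw [hval] at h2
    simp only [Complex.norm_real, Real.norm_eq_abs, abs_of_nonneg (norm_nonneg x)] at h2
    linarith
end

section
/- Let X be a nonzero complex normed space and let ℓ¹ = lp (fun _ : ℕ => ℂ) 1. Then there exist an injective ℂ-linear map g : ℓ¹ → ℓ¹ with ‖g a‖ ≤ ‖a‖ for all a (explicitly, (g a)(n) = a(n)/(n+1)) and a continuous ℂ-linear map T : ℓ¹ → X with ‖T‖ ≤ 1 such that no continuous ℂ-linear map S : ℓ¹ → X with ‖S‖ ≤ 1 satisfies S ∘ g = T. -/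
/-- In any category with operator spaces as objects and completely contractive maps
as morphisms, the only injective object is `{0}`: for every nonzero complex normed
space `X` there are a contractive injective linear map `g : ℓ¹ → ℓ¹`
(explicitly `(g a) n = a n / (n+1)`) and a contractive map `T : ℓ¹ → X` admitting
no contractive extension `S` along `g`. -/
theorem no_nonzero_injective_opsp
    (X : Type*) [NormedAddCommGroup X] [NormedSpace ℂ X]
    (hX : ∃ x : X, x ≠ 0) :
    ∃ g : lp (fun _ : ℕ => ℂ) 1 →ₗ[ℂ] lp (fun _ : ℕ => ℂ) 1,
      (∀ (a : lp (fun _ : ℕ => ℂ) 1) (n : ℕ), (g a : ∀ _ : ℕ, ℂ) n = a n / (n + 1)) ∧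
      Function.Injective g ∧ (∀ a, ‖g a‖ ≤ ‖a‖) ∧
      ∃ T : lp (fun _ : ℕ => ℂ) 1 →L[ℂ] X, ‖T‖ ≤ 1 ∧
        ¬ ∃ S : lp (fun _ : ℕ => ℂ) 1 →L[ℂ] X, ‖S‖ ≤ 1 ∧ ∀ a, S (g a) = T a := by
  have hp : (0:ℝ) < (1 : ENNReal).toReal := by norm_num
  -- summability of coordinates
  have hsum : ∀ a : lp (fun _ : ℕ => ℂ) 1, HasSum (fun n => ‖a n‖) ‖a‖ := by
    intro a
    simpa using lp.hasSum_norm hp a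
  have key : ∀ (a : lp (fun _ : ℕ => ℂ) 1) (n : ℕ), ‖a n / (n+1 : ℂ)‖ ≤ ‖a n‖ := by
    intro a n
    rw [norm_div]
    have h1 : (1:ℝ) ≤ ‖((n:ℂ)+1)‖ := by
      have : ((n:ℂ)+1) = ((n+1 : ℕ) : ℂ) := by push_cast; ring
      rw [this, Complex.norm_natCast]
      exact_mod_cast Nat.one_le_iff_ne_zero.2 (Nat.succ_ne_zero n)
    calc ‖a n‖ / ‖((n:ℂ)+1)‖ ≤ ‖a n‖ / 1 :=
          div_le_div_of_nonneg_left (norm_nonneg _) (by positivity) h1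
      _ = ‖a n‖ := div_one _
  have mem : ∀ a : lp (fun _ : ℕ => ℂ) 1, Memℓp (fun n => a n / (n+1 : ℂ)) 1 := by
    intro a
    apply memℓp_gen
    simp only [ENNReal.toReal_one, Real.rpow_one]
    exact ((hsum a).summable).of_nonneg_of_le (fun n => norm_nonneg _) (key a)
  set g : lp (fun _ : ℕ => ℂ) 1 →ₗ[ℂ] lp (fun _ : ℕ => ℂ) 1 :=
    { toFun := fun a => ⟨fun n => a n / (n+1 : ℂ), mem a⟩
      map_add' := by
        intro a b
        apply lp.ext
        funext n
        simp [add_div]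
        rfl
      map_smul' := by
        intro c a
        apply lp.ext
        funext n
        simp [mul_div_assoc] } with hg
  have hgapp : ∀ (a : lp (fun _ : ℕ => ℂ) 1) (n : ℕ), (g a : ∀ _ : ℕ, ℂ) n = a n / (n + 1) :=
    fun a n => rfl
  refine ⟨g, hgapp, ?_, ?_, ?_⟩
  · -- injective
    intro a b hab
    apply lp.ext
    funext n
    have := congrFun (congrArg (Subtype.val) hab) n
    have hne : ((n:ℂ)+1) ≠ 0 := Nat.cast_add_one_ne_zero n
    rw [hgapp a n, hgapp b n] at this
    field_simp [hne] at this
    exact this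
  · -- contractive
    intro a
    refine hasSum_le (fun n => ?_) (hsum (g a)) (hsum a)
    exact key a n
  · -- the map T
    obtain ⟨x, hx⟩ := hX
    set x₀ : X := ‖x‖⁻¹ • x with hx₀
    have hnx₀ : ‖x₀‖ = 1 := by
      rw [hx₀, norm_smul, norm_inv, norm_norm]
      exact inv_mul_cancel₀ (norm_ne_zero_iff.2 hx)
    set Tlin : lp (fun _ : ℕ => ℂ) 1 →ₗ[ℂ] X :=
      { toFun := fun a => a 1 • x₀
        map_add' := by intro a b; simp [add_smul]
        map_smul' := by intro c a; simp [smul_smul] } with hTlin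
    have hTb : ∀ a : lp (fun _ : ℕ => ℂ) 1, ‖Tlin a‖ ≤ 1 * ‖a‖ := by
      intro a
      rw [one_mul]
      calc ‖(a 1 : ℂ) • x₀‖ = ‖(a 1 : ℂ)‖ := by rw [norm_smul, hnx₀, mul_one]
        _ ≤ ‖a‖ := lp.norm_apply_le_norm one_ne_zero a 1
    set T : lp (fun _ : ℕ => ℂ) 1 →L[ℂ] X := Tlin.mkContinuous 1 hTb with hT
    refine ⟨T, Tlin.mkContinuous_norm_le zero_le_one hTb, ?_⟩
    rintro ⟨S, hS, hSg⟩
    set e : lp (fun _ : ℕ => ℂ) 1 := lp.single 1 1 (1:ℂ) with he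
    have hnorme : ‖e‖ = 1 := by
      have := lp.norm_single (E := fun _ : ℕ => ℂ) (p := 1) zero_lt_one 1 (1:ℂ)
      simpa [he] using this
    have hecoe : ∀ n : ℕ, (e : ∀ _ : ℕ, ℂ) n = if n = 1 then 1 else 0 := by
      intro n
      rw [he]
      by_cases h : n = 1
      · subst h; rw [lp.single_apply_self, if_pos rfl]
      · rw [lp.single_apply_ne _ _ _ h, if_neg h]
    have hTe : T e = x₀ := by
      show Tlin e = x₀
      rw [hTlin]
      show (e : ∀ _ : ℕ, ℂ) 1 • x₀ = x₀
      simp [hTlin, hecoe 1]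
    have hge : g e = (2:ℂ)⁻¹ • e := by
      apply lp.ext
      funext n
      rw [hgapp]
      have h2 : ((2:ℂ)⁻¹ • e : lp (fun _ : ℕ => ℂ) 1) n = (2:ℂ)⁻¹ * (e : ∀ _ : ℕ, ℂ) n := rfl
      rw [h2, hecoe]
      by_cases h : n = 1
      · subst h; norm_num [hecoe]
      · simp [hecoe, h]
    have hSe : S e = (2:ℂ) • x₀ := by
      have h1 : S (g e) = T e := hSg e
      rw [hge, map_smul, hTe] at h1
      have := congrArg (fun y => (2:ℂ) • y) h1
      simpa [smul_smul] using this
    have : ‖S e‖ ≤ 1 := by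
      calc ‖S e‖ ≤ ‖S‖ * ‖e‖ := S.le_opNorm e
        _ ≤ 1 := by rw [hnorme, mul_one]; exact hS
    rw [hSe, norm_smul, hnx₀] at this
    norm_num at this
end

section
/- Let c = C(OnePoint ℕ, ℂ) be the unital commutative C*-algebra of continuous complex-valued functions on the one-point compactification of ℕ, let φ : c → c be defined by φ(a) = (a + a(∞)·1)/2, and let π₁ : c → ℂ be evaluation at the point 0 ∈ ℕ ⊆ OnePoint ℕ. Then there is no ℂ-linear map u : c → ℂ which is unital (u(1) = 1) and positive (if a(t) is a nonnegative real for all t, then u(a) is a nonnegative real) such that u ∘ φ = π₁. -/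
open OnePoint
open scoped OnePoint ComplexOrder

/-- The sequence which is 0 at 0 and 1 elsewhere (with value 1 at ∞). -/
noncomputable def myF : C(OnePoint ℕ, ℂ) :=
  OnePoint.continuousMapMkNat (fun n => if n = 0 then 0 else 1) 1 (by
    apply Filter.Tendsto.congr' _ tendsto_const_nhds
    filter_upwards [Filter.eventually_gt_atTop 0] with n hn
    simp [hn.ne'])

lemma myF_nat (n : ℕ) : myF (n : OnePoint ℕ) = if n = 0 then 0 else 1 := rfl

lemma myF_infty : myF ∞ = 1 := rfl

lemma myF_nonneg (t : OnePoint ℕ) : 0 ≤ myF t := by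
  cases t with
  | infty => exact zero_le_one
  | coe n =>
      rw [myF_nat]
      split <;> simp

/-- There is no unital positive linear functional `u` on the C*-algebra
`c = C(OnePoint ℕ, ℂ)` of convergent complex sequences satisfying
`u ∘ φ = π₁`, where `φ a = (a + a(∞)·1)/2` and `π₁` is evaluation at `0`. -/
theorem no_unital_positive_functional_factoring :
    ¬ ∃ u : C(OnePoint ℕ, ℂ) →ₗ[ℂ] ℂ,
        u 1 = 1 ∧
        (∀ a : C(OnePoint ℕ, ℂ), (∀ t : OnePoint ℕ, 0 ≤ a t) → 0 ≤ u a) ∧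
        (∀ a : C(OnePoint ℕ, ℂ),
          u ((2 : ℂ)⁻¹ • (a + a ∞ • (1 : C(OnePoint ℕ, ℂ)))) = a ((0 : ℕ) : OnePoint ℕ)) := by
  rintro ⟨u, hu1, hpos, hfac⟩
  have key := hfac myF
  rw [_root_.map_smul, map_add, _root_.map_smul, hu1, myF_infty, myF_nat] at key
  simp only [if_pos rfl, eq_self_iff_true, if_true, smul_eq_mul, mul_one, one_mul] at key
  -- key : 2⁻¹ * (u myF + 1) = 0
  have humyF : u myF = -1 := by
    field_simp at key
    linear_combination key
  have := hpos myF myF_nonneg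
  rw [humyF] at this
  exact absurd this (by norm_num [Complex.le_def])
end

section
/- Let A be a nontrivial unital complex C*-algebra, let c = C(OnePoint ℕ, ℂ) be the unital commutative C*-algebra of continuous complex-valued functions on the one-point compactification of ℕ, let φ : c → c be defined by φ(a) = (a + a(∞)·1)/2, and define T : c → A by T(a) = a(0)·1. Then T is a unital ℂ-linear map which is positive (if a(t) is a nonnegative real for all t, then 0 ≤ T(a) in the C*-order of A), and there is no ℂ-linear map S : c → A which is unital (S(1) = 1) and positive (if a(t) is a nonnegative real for all t, then 0 ≤ S(a) in the C*-order of A) such that S ∘ φ = T. -/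
open OnePoint
open scoped OnePoint ComplexOrder

lemma my_smul_one_nonneg {A : Type*} [NormedRing A] [StarRing A] [CStarRing A]
    [NormedAlgebra ℂ A] [StarModule ℂ A] [PartialOrder A] [StarOrderedRing A]
    {z : ℂ} (hz : 0 ≤ z) : 0 ≤ z • (1 : A) := by
  have him : z.im = 0 := by
    rw [Complex.le_def] at hz; exact hz.2.symm
  have hre : 0 ≤ z.re := by
    rw [Complex.le_def] at hz; simpa using hz.1
  set w : ℝ := Real.sqrt z.re with hw
  have key : z • (1 : A) = star ((w : ℂ) • (1 : A)) * ((w : ℂ) • (1 : A)) := by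
    rw [star_smul, star_one, smul_mul_smul_comm, one_mul]
    congr 1
    rw [Complex.star_def, Complex.conj_ofReal, ← Complex.ofReal_mul,
      Real.mul_self_sqrt hre]
    exact (Complex.ext rfl (by simpa using him))
  rw [key]
  exact star_mul_self_nonneg _

open scoped Classical in
/-- indicator of 0 -/
noncomputable def e0 : C(OnePoint ℕ, ℂ) :=
  ⟨fun t => if t = ((0 : ℕ) : OnePoint ℕ) then 1 else 0, by
    have hco : IsClopen ({((0 : ℕ) : OnePoint ℕ)} : Set (OnePoint ℕ)) := by
      have h : ({((0 : ℕ) : OnePoint ℕ)} : Set (OnePoint ℕ)) =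
          ((↑) '' ({0} : Set ℕ)) := by simp
      rw [h]
      constructor
      · exact OnePoint.isClosed_image_coe.2 ⟨isClosed_singleton, isCompact_singleton⟩
      · exact OnePoint.isOpen_image_coe.2 (isOpen_discrete _)
    have : ({t : OnePoint ℕ | t = ((0 : ℕ) : OnePoint ℕ)}) =
        ({((0 : ℕ) : OnePoint ℕ)} : Set (OnePoint ℕ)) := rfl
    apply continuous_if (fun a ha => ?_) continuousOn_const continuousOn_const
    rw [this, hco.frontier_eq] at ha
    exact absurd ha (Set.notMem_empty a)⟩

/-- No nontrivial unital complex C*-algebra is injective in the category of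
operator systems and unital positive linear maps: the unital positive map
`T : c → A`, `T a = a(0)·1`, on the algebra `c = C(OnePoint ℕ, ℂ)` of convergent
sequences admits no unital positive linear extension `S` along the unital
injective positive map `φ a = (a + a(∞)·1)/2`. -/
theorem cstar_algebra_not_injective_opsy
    (A : Type*) [NormedRing A] [StarRing A] [CStarRing A] [NormedAlgebra ℂ A]
    [CompleteSpace A] [StarModule ℂ A] [PartialOrder A] [StarOrderedRing A]
    [Nontrivial A] :
    let T : C(OnePoint ℕ, ℂ) → A := fun a => a ((0 : ℕ) : OnePoint ℕ) • (1 : A)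
    T 1 = 1 ∧
    (∀ a b : C(OnePoint ℕ, ℂ), T (a + b) = T a + T b) ∧
    (∀ (z : ℂ) (a : C(OnePoint ℕ, ℂ)), T (z • a) = z • T a) ∧
    (∀ a : C(OnePoint ℕ, ℂ), (∀ t : OnePoint ℕ, 0 ≤ a t) → 0 ≤ T a) ∧
    ¬ ∃ S : C(OnePoint ℕ, ℂ) →ₗ[ℂ] A,
        S 1 = 1 ∧
        (∀ a : C(OnePoint ℕ, ℂ), (∀ t : OnePoint ℕ, 0 ≤ a t) → 0 ≤ S a) ∧
        (∀ a : C(OnePoint ℕ, ℂ),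
          S ((2 : ℂ)⁻¹ • (a + a ∞ • (1 : C(OnePoint ℕ, ℂ)))) = T a) := by
  intro T
  refine ⟨by simp [T], fun a b => by simp [T, add_smul], fun z a => by simp [T, smul_smul],
    fun a ha => my_smul_one_nonneg (ha _), ?_⟩
  rintro ⟨S, hS1, hSpos, hSext⟩
  -- e0 at ∞ is 0, at 0 is 1
  have heInf : e0 ∞ = 0 := by simp [e0, OnePoint.infty_ne_coe]
  have he0 : e0 ((0 : ℕ) : OnePoint ℕ) = 1 := by simp [e0]
  have hSe : S e0 = (2 : ℂ) • (1 : A) := by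
    have h := hSext e0
    simp only [T, heInf, zero_smul, add_zero, _root_.map_smul, he0, one_smul] at h
    calc S e0 = (2 : ℂ) • ((2 : ℂ)⁻¹ • S e0) := by rw [smul_smul]; norm_num
    _ = (2 : ℂ) • (1 : A) := by rw [h]
  -- 1 - e0 is pointwise nonneg
  have hpos : (0 : A) ≤ S (1 - e0) := by
    apply hSpos
    intro t
    simp only [ContinuousMap.sub_apply, ContinuousMap.one_apply, e0, ContinuousMap.coe_mk]
    by_cases h : t = ((0 : ℕ) : OnePoint ℕ) <;> simp [h]
  rw [map_sub, hS1, hSe] at hpos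
  have h1 : (1 : A) - (2 : ℂ) • (1 : A) = -1 := by
    rw [two_smul ℂ (1 : A)]; abel
  rw [h1] at hpos
  have h01 : (0 : A) ≤ 1 := by simp
  have : (1 : A) = 0 := le_antisymm (by simpa using neg_nonneg.mp hpos) h01
  exact one_ne_zero this
end

section
/- For each integer n ≥ 1, define jₙ : ℂ → ℂ × ℂ, where ℂ × ℂ carries the supremum norm ‖(z, w)‖ = max(|z|, |w|), by jₙ(z) = (−z, −(1 − 1/n)·z). Then: (i) jₙ is an isometric ℂ-linear map; (ii) every element of ℂ × ℂ can be written as λ·(1,1) + jₙ(z) for some λ, z ∈ ℂ (i.e., ℂ·(1,1) + jₙ(ℂ) = ℂ × ℂ); and (iii) ‖(1,1) + jₙ(1)‖ = 1/n. -/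
/-- There is no smallest unitization of an operator space: for each `n ≥ 1`, the
map `jₙ : ℂ → ℂ × ℂ` (sup norm), `jₙ z = (−z, −(1 − 1/n) z)`, is an isometric
ℂ-linear embedding with `ℂ·(1,1) + jₙ(ℂ) = ℂ × ℂ` (so `ℂ × ℂ` is a unitization of
`ℂ` with unit `(1,1)`), yet `‖(1,1) + jₙ(1)‖ = 1/n`. -/
theorem no_smallest_unitization (n : ℕ) (hn : 1 ≤ n) :
    let j : ℂ → ℂ × ℂ := fun z => (-z, -((1 - 1 / (n : ℂ)) * z))
    (∀ z w : ℂ, j (z + w) = j z + j w) ∧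
    (∀ (c z : ℂ), j (c * z) = c • j z) ∧
    (∀ z : ℂ, ‖j z‖ = ‖z‖) ∧
    (∀ v : ℂ × ℂ, ∃ l z : ℂ, v = l • ((1, 1) : ℂ × ℂ) + j z) ∧
    ‖((1, 1) : ℂ × ℂ) + j 1‖ = 1 / (n : ℝ) := by
  intro j
  have hn0 : (n : ℝ) ≠ 0 := Nat.cast_ne_zero.mpr (by omega)
  have hnc : (n : ℂ) ≠ 0 := Nat.cast_ne_zero.mpr (by omega)
  have h1 : (0:ℝ) ≤ 1 - 1 / (n:ℝ) := by
    have : (1:ℝ) ≤ (n:ℝ) := by exact_mod_cast hn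
    have h2 : 1 / (n:ℝ) ≤ 1 := by
      rw [div_le_one (by positivity)]; exact this
    linarith
  have hnormc : ‖(1 - 1 / (n:ℂ))‖ = 1 - 1 / (n:ℝ) := by
    rw [show (1 - 1/(n:ℂ)) = ((1 - 1/(n:ℝ) : ℝ) : ℂ) by push_cast; ring,
      Complex.norm_real, Real.norm_eq_abs, abs_of_nonneg h1]
  refine ⟨?_, ?_, ?_, ?_, ?_⟩
  · intro z w
    simp only [j, Prod.mk_add_mk, Prod.mk.injEq]
    constructor <;> ring
  · intro c z
    simp only [j, Prod.smul_mk, smul_eq_mul, Prod.mk.injEq]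
    constructor <;> ring
  · intro z
    rw [Prod.norm_def]
    simp only [j, norm_neg, norm_mul, hnormc]
    have hz := norm_nonneg z
    have h2 : 1 - 1/(n:ℝ) ≤ 1 := by
      have : (0:ℝ) ≤ 1/(n:ℝ) := by positivity
      linarith
    rw [max_eq_left]
    nlinarith [mul_le_mul_of_nonneg_right h2 hz]
  · intro v
    refine ⟨v.1 + n * (v.2 - v.1), n * (v.2 - v.1), ?_⟩
    have : v = (v.1, v.2) := rfl
    rw [this]
    simp only [j, Prod.smul_mk, smul_eq_mul, mul_one, Prod.mk_add_mk, Prod.mk.injEq]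
    constructor
    · ring
    · field_simp
      ring
  · have he : ((1, 1) : ℂ × ℂ) + j 1 = (0, 1 / (n:ℂ)) := by
      simp only [j, mul_one, Prod.mk_add_mk, Prod.mk.injEq]
      constructor <;> ring
    rw [he, Prod.norm_def]
    simp only [norm_zero]
    rw [show (1/(n:ℂ)) = ((1/(n:ℝ) : ℝ) : ℂ) by push_cast; ring, Complex.norm_real,
      Real.norm_eq_abs, abs_of_nonneg (by positivity)]
    rw [max_eq_right (by positivity)]
end
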